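/- Let u ∈ ℝⁿ be a unit vector, a > 0, and Y a real symmetric positive definite n×n matrix. If ‖(I + a uuᵀ) Y (I + a uuᵀ)‖_F = 1, then ‖Y‖_F < 1. -/

import Mathlib

open Matrix

theorem stmt_13 {n : ℕ} (u : Fin n → ℝ) (hu : ∑ i, u i ^ 2 = 1) (a : ℝ) (ha : 0 < a)
    (Y : Matrix (Fin n) (Fin n) ℝ) (hY : Y.PosDef)
    (h : Real.sqrt ((((1 + a • vecMulVec u u) * Y * (1 + a • vecMulVec u u))ᵀ *
        ((1 + a • vecMulVec u u) * Y * (1 + a • vecMulVec u u))).trace) = 1) :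
    Real.sqrt ((Yᵀ * Y).trace) < 1 := by
  set P : Matrix (Fin n) (Fin n) ℝ := vecMulVec u u with hP
  have hYt : Yᵀ = Y := by
    have := hY.isHermitian
    simpa [Matrix.IsHermitian, Matrix.conjTranspose_eq_transpose_of_trivial] using this
  set w : Fin n → ℝ := Y *ᵥ u with hw
  set s : ℝ := u ⬝ᵥ w with hs
  -- basic identities
  have hPt : Pᵀ = P := by
    ext i j; simp [hP, vecMulVec_apply, mul_comm, Matrix.transpose_apply]
  have hsymm : ∀ i j, Y j i = Y i j := fun i j => congrFun (congrFun hYt i) j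
  have hYPY : Y * P * Y = vecMulVec w w := by
    ext i j
    simp only [Matrix.mul_apply, hP, vecMulVec_apply]
    have h1 : ∀ k, (∑ l, Y i l * (u l * u k)) * Y k j
        = (w i * u k) * Y k j := by
      intro k
      congr 1
      simp only [hw, Matrix.mulVec, dotProduct, Finset.sum_mul]
      exact Finset.sum_congr rfl fun l _ => by ring
    have h2 : w j = ∑ k, u k * Y k j := by
      simp only [hw, Matrix.mulVec, dotProduct]
      exact Finset.sum_congr rfl fun k _ => by rw [hsymm k j]; ring
    calc ∑ k, (∑ l, Y i l * (u l * u k)) * Y k j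
        = ∑ k, (w i * u k) * Y k j := Finset.sum_congr rfl fun k _ => h1 k
      _ = w i * w j := by
          rw [h2, Finset.mul_sum]
          exact Finset.sum_congr rfl fun k _ => by ring
  have htraceP : ∀ A : Matrix (Fin n) (Fin n) ℝ, (vecMulVec w w * A).trace
      = ∑ i, ∑ k, w i * w k * A k i := by
    intro A
    simp [Matrix.trace, Matrix.diag, Matrix.mul_apply, vecMulVec_apply]
  -- q = trace (Y * P * Y) = ∑ w i ^ 2 > 0
  have hq : (Y * P * Y).trace = ∑ i, w i ^ 2 := by
    rw [hYPY]
    simp [Matrix.trace, Matrix.diag, vecMulVec_apply, sq]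
  have hu0 : u ≠ 0 := by
    intro h0
    rw [h0] at hu
    simp at hu
  have hw0 : w ≠ 0 := by
    intro h0
    exact hu0 (Matrix.eq_zero_of_mulVec_eq_zero (ne_of_gt hY.det_pos) h0)
  have hqpos : 0 < ∑ i, w i ^ 2 := by
    rcases Function.ne_iff.mp hw0 with ⟨i, hi⟩
    have : 0 < w i ^ 2 := lt_of_le_of_ne (sq_nonneg _) (Ne.symm (pow_ne_zero 2 hi))
    exact Finset.sum_pos' (fun j _ => sq_nonneg _) ⟨i, Finset.mem_univ i, this⟩
  -- trace (Y*P*Y*P) = s^2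
  have hPYPY : (Y * P * Y * P).trace = s ^ 2 := by
    rw [hYPY, htraceP]
    have : ∀ i, ∑ k, w i * w k * P k i = (w i * u i) * s := by
      intro i
      simp only [hP, vecMulVec_apply, hs, dotProduct]
      rw [Finset.mul_sum]
      exact Finset.sum_congr rfl fun k _ => by ring
    rw [Finset.sum_congr rfl fun i _ => this i, ← Finset.sum_mul]
    have : ∑ i, w i * u i = s := by
      simp [hs, dotProduct, mul_comm]
    rw [this]; ring
  -- main trace computation
  set M : Matrix (Fin n) (Fin n) ℝ := 1 + a • P with hM
  have hMt : Mᵀ = M := by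
    simp [hM, Matrix.transpose_add, Matrix.transpose_smul, hPt]
  have hPP : P * P = P := by
    ext i j
    simp only [Matrix.mul_apply, hP, vecMulVec_apply]
    calc ∑ k, u i * u k * (u k * u j) = ∑ k, (u i * u j) * u k ^ 2 :=
          Finset.sum_congr rfl fun k _ => by ring
      _ = u i * u j := by rw [← Finset.mul_sum, hu, mul_one]
  have hMM : M * M = 1 + (2 * a + a ^ 2) • P := by
    simp only [hM, add_mul, mul_add, one_mul, mul_one, Matrix.smul_mul, Matrix.mul_smul, hPP,
      smul_smul]
    module
  set b : ℝ := 2 * a + a ^ 2 with hb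
  have hbpos : 0 < b := by positivity
  have key : ((M * Y * M)ᵀ * (M * Y * M)).trace
      = (Y * Y).trace + 2 * b * (∑ i, w i ^ 2) + b ^ 2 * s ^ 2 := by
    have h1 : (M * Y * M)ᵀ = M * Y * M := by
      rw [Matrix.transpose_mul, Matrix.transpose_mul, hMt, hYt, Matrix.mul_assoc]
    rw [h1]
    have h2 : (M * Y * M) * (M * Y * M) = M * (Y * (M * M) * Y * M) := by
      noncomm_ring
    rw [h2, Matrix.trace_mul_comm]
    have h3 : Y * (M * M) * Y * M * M = Y * (M * M) * Y * (M * M) := by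
      rw [Matrix.mul_assoc (Y * (M * M) * Y)]
    rw [h3, hMM]
    have expand : Y * (1 + b • P) * Y * (1 + b • P)
        = Y * Y + b • (Y * Y * P) + b • (Y * P * Y) + (b ^ 2) • (Y * P * Y * P) := by
      simp only [add_mul, mul_add, one_mul, mul_one, Matrix.smul_mul, Matrix.mul_smul, smul_smul]
      rw [show b * b = b ^ 2 by ring]
      noncomm_ring
    rw [expand]
    simp only [Matrix.trace_add, Matrix.trace_smul, smul_eq_mul]
    have h4 : (Y * Y * P).trace = (Y * P * Y).trace := by
      rw [Matrix.mul_assoc, Matrix.trace_mul_comm]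
    rw [h4, hq, hPYPY]
    ring
  -- finish
  have htr1 : ((M * Y * M)ᵀ * (M * Y * M)).trace = 1 := Real.sqrt_eq_one.mp h
  have hYY : (Yᵀ * Y).trace = (Y * Y).trace := by rw [hYt]
  have hlt : (Yᵀ * Y).trace < 1 := by
    rw [hYY]
    nlinarith [sq_nonneg s, key, htr1, hqpos, hbpos]
  have hnn : 0 ≤ (Yᵀ * Y).trace := by
    have : (Yᵀ * Y).trace = ∑ i, ∑ k, Y k i * Y k i := by
      simp [Matrix.trace, Matrix.diag, Matrix.mul_apply, Matrix.transpose_apply]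
    rw [this]
    exact Finset.sum_nonneg fun i _ => Finset.sum_nonneg fun k _ => mul_self_nonneg _
  calc Real.sqrt ((Yᵀ * Y).trace) < Real.sqrt 1 := Real.sqrt_lt_sqrt hnn (by simpa using hlt)
    _ = 1 := Real.sqrt_one
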